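/- Consider a set of vertices V with open intervals I_v, true weights w_v ∈ I_v, and predicted weights ŵ_v ∈ I_v, and a hypergraph H = (V,E). Let 𝓘_P be the set of vertices that are mandatory when the weights are ŵ, and 𝓘_R the set of vertices mandatory when the weights are w. Define the hop distance k_h = Σ_{v∈V} |{u ∈ V \ {v} : the relation of w_v to the interval I_u differs from the relation of ŵ_v to I_u, i.e., exactly one of w_v, ŵ_v is ≤ L_u, or exactly one is ≥ U_u}|. Then the mandatory query distance k_M = |𝓘_P △ 𝓘_R| satisfies k_M ≤ k_h. -/
import Mathlib


open Finset

/-- Lower endpoint of vertex `v`'s interval after querying the set `Q`. -/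
def qlo {V : Type*} [DecidableEq V] (L w : V → ℝ) (Q : Finset V) (v : V) : ℝ :=
  if v ∈ Q then w v else L v

/-- Upper endpoint of vertex `v`'s interval after querying the set `Q`. -/
def qhi {V : Type*} [DecidableEq V] (U w : V → ℝ) (Q : Finset V) (v : V) : ℝ :=
  if v ∈ Q then w v else U v

/-- The query set `Q` suffices to orient the hyperedge `S`: some vertex of `S`
has its (updated) interval weakly below all other (updated) intervals of `S`. -/
def Solves {V : Type*} [DecidableEq V] (L U w : V → ℝ) (Q : Finset V) (S : Finset V) : Prop :=
  ∃ m ∈ S, ∀ u ∈ S, u ≠ m → qhi U w Q m ≤ qlo L w Q u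

/-- A vertex is mandatory (for weights `w`) if it belongs to every query set
that orients all hyperedges of `E`. -/
def Mandatory {V : Type*} [DecidableEq V] (L U w : V → ℝ) (E : Finset (Finset V)) (v : V) : Prop :=
  ∀ Q : Finset V, (∀ S ∈ E, Solves L U w Q S) → v ∈ Q

section Aux

variable {V : Type*} [DecidableEq V]

lemma solves_mono {L U w : V → ℝ} (hw : ∀ x : V, w x ∈ Set.Ioo (L x) (U x))
    {Q Q' : Finset V} (h : Q ⊆ Q') {S : Finset V} (hs : Solves L U w Q S) :
    Solves L U w Q' S := by
  obtain ⟨m, hm, hall⟩ := hs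
  refine ⟨m, hm, fun u hu hum => ?_⟩
  have h1 : qhi U w Q' m ≤ qhi U w Q m := by
    unfold qhi
    by_cases hm' : m ∈ Q'
    · simp only [hm', if_true]
      split_ifs with h2
      · exact le_rfl
      · exact (hw m).2.le
    · rw [if_neg hm', if_neg (fun hh => hm' (h hh))]
  have h2 : qlo L w Q u ≤ qlo L w Q' u := by
    unfold qlo
    by_cases hu' : u ∈ Q'
    · simp only [hu', if_true]
      split_ifs with h2
      · exact le_rfl
      · exact (hw u).1.le
    · rw [if_neg hu', if_neg (fun hh => hu' (h hh))]
  exact h1.trans ((hall u hu hum).trans h2)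

variable [Fintype V]

lemma qhi_maxq {U a : V → ℝ} {v x : V} (hx : x ≠ v) : qhi U a (univ \ {v}) x = a x := by
  simp [qhi, hx]

lemma qlo_maxq {L a : V → ℝ} {v x : V} (hx : x ≠ v) : qlo L a (univ \ {v}) x = a x := by
  simp [qlo, hx]

lemma qhi_maxq_self {U a : V → ℝ} {v : V} : qhi U a (univ \ {v}) v = U v := by
  simp [qhi]

lemma qlo_maxq_self {L a : V → ℝ} {v : V} : qlo L a (univ \ {v}) v = L v := by
  simp [qlo]

/-- The key combinatorial lemma: if the maximal query set avoiding `v` fails to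
solve `S` under weights `a` but solves it under weights `b`, then some vertex
`m ≠ v` hops over an endpoint of `v`'s interval. -/
lemma key {L U a b : V → ℝ} {v : V} {S : Finset V}
    (hna : ¬ Solves L U a (univ \ {v}) S)
    (hb : Solves L U b (univ \ {v}) S) :
    ∃ m, m ≠ v ∧ ((b m ≤ L v ∧ L v < a m) ∨ (a m < U v ∧ U v ≤ b m)) := by
  unfold Solves at hna
  push_neg at hna
  obtain ⟨mb, hmbS, hmb⟩ := hb
  -- v ∈ S
  have hvS : v ∈ S := by
    by_contra hv
    obtain ⟨m, hmS, hmin⟩ := S.exists_min_image a ⟨mb, hmbS⟩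
    obtain ⟨u, huS, hune, hlt⟩ := hna m hmS
    have hmv : m ≠ v := fun h => hv (h ▸ hmS)
    have huv : u ≠ v := fun h => hv (h ▸ huS)
    rw [qhi_maxq hmv, qlo_maxq huv] at hlt
    exact absurd (hmin u huS) (not_le.2 hlt)
  -- from failure at m = v : some u ∈ S, u ≠ v with a u < U v
  obtain ⟨u₀, hu₀S, hu₀ne, hu₀lt⟩ := hna v hvS
  rw [qhi_maxq_self, qlo_maxq hu₀ne] at hu₀lt
  -- minimizer of a on S.erase v
  obtain ⟨ma, hmaT, hmin⟩ := (S.erase v).exists_min_image a ⟨u₀, mem_erase.2 ⟨hu₀ne, hu₀S⟩⟩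
  have hmaS : ma ∈ S := mem_of_mem_erase hmaT
  have hmav : ma ≠ v := ne_of_mem_erase hmaT
  -- from failure at ma : L v < a ma
  have hLlt : L v < a ma := by
    obtain ⟨u, huS, hune, hlt⟩ := hna ma hmaS
    rw [qhi_maxq hmav] at hlt
    by_cases huv : u = v
    · rwa [huv, qlo_maxq_self] at hlt
    · rw [qlo_maxq huv] at hlt
      exact absurd (hmin u (mem_erase.2 ⟨huv, huS⟩)) (not_le.2 hlt)
  by_cases hmbv : mb = v
  · -- witness of solving is v itself : U v ≤ b u for all u ≠ v in S
    subst hmbv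
    have h1 : U mb ≤ b ma := by
      have := hmb ma hmaS hmav
      rwa [qhi_maxq_self, qlo_maxq hmav] at this
    have h2 : a ma < U mb := lt_of_le_of_lt (hmin u₀ (mem_erase.2 ⟨hu₀ne, hu₀S⟩)) hu₀lt
    exact ⟨ma, hmav, Or.inr ⟨h2, h1⟩⟩
  · -- witness mb ≠ v : b mb ≤ L v, and a mb ≥ a ma > L v
    have h1 : b mb ≤ L v := by
      have := hmb v hvS (Ne.symm hmbv)
      rwa [qhi_maxq hmbv, qlo_maxq_self] at this
    have h2 : L v < a mb :=
      lt_of_lt_of_le hLlt (hmin mb (mem_erase.2 ⟨hmbv, hmbS⟩))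
    exact ⟨mb, hmbv, Or.inl ⟨h1, h2⟩⟩

/-- Characterization of mandatory vertices via the maximal query set avoiding `v`. -/
lemma mandatory_iff {L U w : V → ℝ} (hw : ∀ x : V, w x ∈ Set.Ioo (L x) (U x))
    (E : Finset (Finset V)) (v : V) :
    Mandatory L U w E v ↔ ∃ S ∈ E, ¬ Solves L U w (univ \ {v}) S := by
  constructor
  · intro hM
    by_contra h
    push_neg at h
    have := hM (univ \ {v}) h
    simp at this
  · rintro ⟨S, hS, hns⟩ Q hQ
    by_contra hv
    have hsub : Q ⊆ univ \ {v} := fun x hx =>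
      mem_sdiff.2 ⟨mem_univ x, fun hxv => hv ((mem_singleton.1 hxv) ▸ hx)⟩
    exact hns (solves_mono hw hsub (hQ S hS))

end Aux

open scoped Classical in
/-- The mandatory query distance is at most the hop distance. -/
theorem stmt3 {V : Type*} [Fintype V] [DecidableEq V] (L U w pw : V → ℝ)
    (hw : ∀ x : V, w x ∈ Set.Ioo (L x) (U x))
    (hpw : ∀ x : V, pw x ∈ Set.Ioo (L x) (U x))
    (E : Finset (Finset V)) :
    (symmDiff (Finset.univ.filter (Mandatory L U pw E))
              (Finset.univ.filter (Mandatory L U w E))).card ≤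
      ∑ v : V, (Finset.univ.filter (fun u : V => u ≠ v ∧
        ((pw v ≤ L u ∧ L u < w v) ∨ (w v ≤ L u ∧ L u < pw v) ∨
         (w v < U u ∧ U u ≤ pw v) ∨ (pw v < U u ∧ U u ≤ w v)))).card := by
  classical
  set Cond : V → V → Prop := fun v u =>
    u ≠ v ∧ ((pw v ≤ L u ∧ L u < w v) ∨ (w v ≤ L u ∧ L u < pw v) ∨
      (w v < U u ∧ U u ≤ pw v) ∨ (pw v < U u ∧ U u ≤ w v)) with hCond
  set D := symmDiff (Finset.univ.filter (Mandatory L U pw E))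
      (Finset.univ.filter (Mandatory L U w E)) with hD
  -- every element of the symmetric difference has a hop witness
  have hwit : ∀ x ∈ D, ∃ m : V, Cond m x := by
    intro x hx
    rw [hD, Finset.mem_symmDiff] at hx
    rcases hx with ⟨h1, h2⟩ | ⟨h1, h2⟩
    · -- mandatory for pw, not for w
      have hMp : Mandatory L U pw E x := (mem_filter.1 h1).2
      have hMw : ¬ Mandatory L U w E x := fun h => h2 (mem_filter.2 ⟨mem_univ x, h⟩)
      obtain ⟨S, hS, hns⟩ := (mandatory_iff hpw E x).1 hMp
      rw [mandatory_iff hw E x] at hMw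
      push_neg at hMw
      have hsol := hMw S hS
      obtain ⟨m, hmne, hc⟩ := key hns hsol
      refine ⟨m, Ne.symm hmne, ?_⟩
      rcases hc with ⟨c1, c2⟩ | ⟨c1, c2⟩
      · exact Or.inr (Or.inl ⟨c1, c2⟩)
      · exact Or.inr (Or.inr (Or.inr ⟨c1, c2⟩))
    · -- mandatory for w, not for pw
      have hMw : Mandatory L U w E x := (mem_filter.1 h1).2
      have hMp : ¬ Mandatory L U pw E x := fun h => h2 (mem_filter.2 ⟨mem_univ x, h⟩)
      obtain ⟨S, hS, hns⟩ := (mandatory_iff hw E x).1 hMw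
      rw [mandatory_iff hpw E x] at hMp
      push_neg at hMp
      have hsol := hMp S hS
      obtain ⟨m, hmne, hc⟩ := key hns hsol
      refine ⟨m, Ne.symm hmne, ?_⟩
      rcases hc with ⟨c1, c2⟩ | ⟨c1, c2⟩
      · exact Or.inl ⟨c1, c2⟩
      · exact Or.inr (Or.inr (Or.inl ⟨c1, c2⟩))
  rcases D.eq_empty_or_nonempty with hDe | hDn
  · simp [← hD, hDe]
  · have : Nonempty V := ⟨hDn.choose⟩
    have hwit' : ∀ x : V, ∃ m : V, x ∈ D → Cond m x := by
      intro x
      by_cases hx : x ∈ D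
      · exact (hwit x hx).imp fun m hm _ => hm
      · exact ⟨Classical.arbitrary V, fun h => absurd h hx⟩
    choose f hf using hwit'
    have hle : D.card ≤ (Finset.univ.sigma fun v : V =>
        Finset.univ.filter fun u : V => Cond v u).card := by
      apply Finset.card_le_card_of_injOn (fun x => ⟨f x, x⟩)
      · intro x hx
        exact Finset.mem_sigma.2 ⟨mem_univ _, mem_filter.2 ⟨mem_univ _, hf x hx⟩⟩
      · intro a _ b _ h
        exact congrArg Sigma.snd h
    rw [Finset.card_sigma] at hle
    exact hle
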